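/- For every natural number k ≥ 0, every α ∈ [0,1], and every nonnegative sequence (a_i)_{i∈ℕ} with only finitely many nonzero terms, we have (∑_i a_i)^{k+α} ≤ (k+1) · ∑_{i_1,...,i_k} a_{i_1}···a_{i_k} · (∑_{j ≤ min{i_1,...,i_k}} a_j)^α. -/

import Mathlib

open Finset

lemma keyA (k n : ℕ) (a : Fin n → ℝ) (ha : ∀ i, 0 ≤ a i) :
    (∑ i, a i) ^ (k + 1) ≤ (k + 1 : ℝ) * ∑ I : Fin k → Fin n,
      (∏ t, a (I t)) * (∑ j ∈ univ.filter fun j => ∀ t, j ≤ I t, a j) := by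
  classical
  set F : (Fin (k+1) → Fin n) → ℝ := fun J => ∏ s, a (J s) with hF
  have hFnn : ∀ J, 0 ≤ F J := fun J => Finset.prod_nonneg fun s _ => ha _
  have hmin : ∀ J : Fin (k+1) → Fin n, ∃ s, ∀ t, J s ≤ J t := by
    intro J
    obtain ⟨s, -, hs⟩ := Finset.exists_min_image univ J ⟨0, mem_univ 0⟩
    exact ⟨s, fun t => hs t (mem_univ t)⟩
  choose m hm using hmin
  rw [Fintype.sum_pow]
  have step2 : ∑ J : Fin (k+1) → Fin n, F J ≤
      ∑ p ∈ (univ.filter fun p : Fin (k+1) × (Fin (k+1) → Fin n) => ∀ t, p.2 p.1 ≤ p.2 t),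
        F p.2 := by
    have h1 : ∑ J : Fin (k+1) → Fin n, F J
        = ∑ p ∈ univ.image (fun J : Fin (k+1) → Fin n => (m J, J)), F p.2 := by
      rw [Finset.sum_image]
      intro x _ y _ h
      exact congrArg Prod.snd h
    rw [h1]
    apply Finset.sum_le_sum_of_subset_of_nonneg
    · intro p hp
      simp only [mem_image] at hp
      obtain ⟨J, -, rfl⟩ := hp
      simp only [mem_filter, mem_univ, true_and]
      exact hm J
    · intro p _ _
      exact hFnn _
  refine step2.trans ?_
  have h3 : ∑ p ∈ (univ.filter fun p : Fin (k+1) × (Fin (k+1) → Fin n) => ∀ t, p.2 p.1 ≤ p.2 t),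
        F p.2
      = ∑ s : Fin (k+1), ∑ J : Fin (k+1) → Fin n, if (∀ t, J s ≤ J t) then F J else 0 := by
    rw [Finset.sum_filter, Fintype.sum_prod_type]
  rw [h3]
  have hswap : ∀ s : Fin (k+1),
      (∑ J : Fin (k+1) → Fin n, if (∀ t, J s ≤ J t) then F J else 0)
      = ∑ J : Fin (k+1) → Fin n, if (∀ t, J 0 ≤ J t) then F J else 0 := by
    intro s
    refine (Fintype.sum_bijective (fun J : Fin (k+1) → Fin n => J ∘ (Equiv.swap 0 s))
      ?_ _ _ ?_).symm
    · exact (Equiv.arrowCongr (Equiv.swap 0 s) (Equiv.refl (Fin n))).symm.bijective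
    · intro J
      have hc : (∀ t, (J ∘ (Equiv.swap 0 s)) s ≤ (J ∘ (Equiv.swap 0 s)) t)
          ↔ (∀ t, J 0 ≤ J t) := by
        constructor
        · intro h t
          have := h ((Equiv.swap 0 s) t)
          simpa [Equiv.swap_apply_right] using this
        · intro h t
          simpa [Equiv.swap_apply_right] using h ((Equiv.swap 0 s) t)
      have hp : F (J ∘ (Equiv.swap 0 s)) = F J := by
        simp only [hF, Function.comp]
        exact Fintype.prod_equiv (Equiv.swap 0 s) _ _ (fun t => rfl)
      simp only [hc, hp]
  have h0 : (∑ J : Fin (k+1) → Fin n, if (∀ t, J 0 ≤ J t) then F J else 0)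
      = ∑ I : Fin k → Fin n,
          (∏ t, a (I t)) * (∑ j ∈ univ.filter fun j => ∀ t, j ≤ I t, a j) := by
    calc (∑ J : Fin (k+1) → Fin n, if (∀ t, J 0 ≤ J t) then F J else 0)
        = ∑ p : Fin n × (Fin k → Fin n),
            (if (∀ t, p.1 ≤ p.2 t) then a p.1 * ∏ t, a (p.2 t) else 0) := by
          rw [← (Fin.consEquiv (fun _ => Fin n)).sum_comp]
          refine Fintype.sum_congr _ _ ?_
          rintro ⟨j, I⟩
          have hcond : (∀ t : Fin (k+1), (Fin.cons j I : Fin (k+1) → Fin n) 0 ≤ (Fin.cons j I : Fin (k+1) → Fin n) t)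
              ↔ ∀ t : Fin k, j ≤ I t := by
            simp only [Fin.cons_zero]
            constructor
            · intro h t
              simpa [Fin.cons_succ] using h t.succ
            · intro h t
              refine Fin.cases ?_ ?_ t
              · simp
              · intro i; simpa [Fin.cons_succ] using h i
          have hprod : F (Fin.cons j I : Fin (k+1) → Fin n) = a j * ∏ t, a (I t) := by
            simp only [hF]
            rw [Fin.prod_univ_succ]
            simp [Fin.cons_succ]
          simp only [Fin.consEquiv_apply]
          rw [if_congr hcond rfl rfl]
          split
          · exact hprod
          · rfl
      _ = ∑ I : Fin k → Fin n,
            (∏ t, a (I t)) * (∑ j ∈ univ.filter fun j => ∀ t, j ≤ I t, a j) := by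
          rw [Fintype.sum_prod_type, Finset.sum_comm]
          refine Finset.sum_congr rfl fun I _ => ?_
          rw [Finset.sum_filter, Finset.mul_sum]
          refine Finset.sum_congr rfl fun j _ => ?_
          split <;> ring
  simp only [hswap, h0, Finset.sum_const, card_univ, Fintype.card_fin, nsmul_eq_mul]
  push_cast
  exact le_refl _

/-- For every `k : ℕ`, `α ∈ [0,1]`, and every nonnegative finite sequence
`a : Fin n → ℝ`, we have
`(∑ i, a i)^(k+α) ≤ (k+1) * ∑_{i₁,…,i_k} a_{i₁}⋯a_{i_k} (∑_{j ≤ min iₜ} a_j)^α`. -/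
theorem stmt0 (k : ℕ) (α : ℝ) (hα0 : 0 ≤ α) (hα1 : α ≤ 1)
    (n : ℕ) (a : Fin n → ℝ) (ha : ∀ i, 0 ≤ a i) :
    (∑ i, a i) ^ ((k : ℝ) + α) ≤
      (k + 1) * ∑ I : Fin k → Fin n,
        (∏ t, a (I t)) *
          (∑ j ∈ univ.filter fun j => ∀ t, j ≤ I t, a j) ^ α := by
  classical
  set S := ∑ i, a i with hS
  have hS0 : 0 ≤ S := Finset.sum_nonneg fun i _ => ha i
  have hfnn : ∀ I : Fin k → Fin n, 0 ≤ ∑ j ∈ univ.filter (fun j => ∀ t, j ≤ I t), a j :=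
    fun I => Finset.sum_nonneg fun j _ => ha j
  have hfle : ∀ I : Fin k → Fin n, (∑ j ∈ univ.filter (fun j => ∀ t, j ≤ I t), a j) ≤ S :=
    fun I => Finset.sum_le_sum_of_subset_of_nonneg (Finset.filter_subset _ _)
      (fun j _ _ => ha j)
  have hPnn : ∀ I : Fin k → Fin n, 0 ≤ ∏ t, a (I t) :=
    fun I => Finset.prod_nonneg fun t _ => ha _
  rcases Nat.eq_zero_or_pos k with rfl | hk
  · -- k = 0
    have h1 : ∑ I : Fin 0 → Fin n,
        (∏ t, a (I t)) * (∑ j ∈ univ.filter fun j => ∀ t, j ≤ I t, a j) ^ α = S ^ α := by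
      simp [Finset.filter_true_of_mem]
      rfl
    rw [h1]
    norm_num
  · rcases eq_or_lt_of_le hS0 with hSz | hSpos
    · -- S = 0
      have hne : ((k : ℝ) + α) ≠ 0 := by
        have : (1 : ℝ) ≤ (k : ℝ) := by exact_mod_cast hk
        linarith
      rw [← hSz, Real.zero_rpow hne]
      have : (0:ℝ) ≤ (k + 1 : ℝ) * ∑ I : Fin k → Fin n,
          (∏ t, a (I t)) * (∑ j ∈ univ.filter fun j => ∀ t, j ≤ I t, a j) ^ α := by
        refine mul_nonneg (by positivity) (Finset.sum_nonneg fun I _ => ?_)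
        exact mul_nonneg (hPnn I) (Real.rpow_nonneg (hfnn I) α)
      exact this
    · -- S > 0
      have hptwise : ∀ I : Fin k → Fin n,
          S ^ (α - 1) * (∑ j ∈ univ.filter (fun j => ∀ t, j ≤ I t), a j) ≤
          (∑ j ∈ univ.filter (fun j => ∀ t, j ≤ I t), a j) ^ α := by
        intro I
        obtain hxz | hxpos := eq_or_lt_of_le (hfnn I)
        · rw [← hxz, mul_zero]
          exact Real.rpow_nonneg le_rfl α
        · have h1 : (∑ j ∈ univ.filter (fun j => ∀ t, j ≤ I t), a j) ^ (α - 1) *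
              (∑ j ∈ univ.filter (fun j => ∀ t, j ≤ I t), a j)
              = (∑ j ∈ univ.filter (fun j => ∀ t, j ≤ I t), a j) ^ α := by
            rw [← Real.rpow_add_one (ne_of_gt hxpos)]
            norm_num
          rw [← h1]
          exact mul_le_mul_of_nonneg_right
            (Real.rpow_le_rpow_of_nonpos hxpos (hfle I) (by linarith)) (le_of_lt hxpos)
      have hkeyA := keyA k n a ha
      have hBnn : (0:ℝ) ≤ ∑ I : Fin k → Fin n,
          (∏ t, a (I t)) * (∑ j ∈ univ.filter fun j => ∀ t, j ≤ I t, a j) :=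
        Finset.sum_nonneg fun I _ => mul_nonneg (hPnn I) (hfnn I)
      calc S ^ ((k : ℝ) + α)
          = S ^ (α - 1) * S ^ (k + 1) := by
            rw [← Real.rpow_natCast S (k+1), ← Real.rpow_add hSpos]
            congr 1
            push_cast
            ring
        _ ≤ S ^ (α - 1) * ((k + 1 : ℝ) * ∑ I : Fin k → Fin n,
              (∏ t, a (I t)) * (∑ j ∈ univ.filter fun j => ∀ t, j ≤ I t, a j)) := by
            exact mul_le_mul_of_nonneg_left hkeyA (Real.rpow_nonneg hS0 _)
        _ = (k + 1 : ℝ) * ∑ I : Fin k → Fin n,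
              (∏ t, a (I t)) * (S ^ (α - 1) *
                (∑ j ∈ univ.filter fun j => ∀ t, j ≤ I t, a j)) := by
            rw [Finset.mul_sum, Finset.mul_sum, Finset.mul_sum]
            exact Finset.sum_congr rfl fun I _ => by ring
        _ ≤ (k + 1 : ℝ) * ∑ I : Fin k → Fin n,
              (∏ t, a (I t)) * (∑ j ∈ univ.filter fun j => ∀ t, j ≤ I t, a j) ^ α := by
            refine mul_le_mul_of_nonneg_left (Finset.sum_le_sum fun I _ => ?_) (by positivity)
            exact mul_le_mul_of_nonneg_left (hptwise I) (hPnn I)
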